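/- arXiv:1606.07010 — 5 statements merged into one kernel-verified Lean document; each statement's English description precedes it below -/
import Mathlib

section
/- Let α ∈ (0,1], let t > 0, and let f, g : [0,∞) → ℝ be α-differentiable at t. Then the product f·g is α-differentiable at t and T_α(f g)(t) = f(t)·T_α(g)(t) + g(t)·T_α(f)(t). -/
noncomputable section
open Real Filter Topology

/-- The conformable fractional derivative of order `α` of `f` at `t`:
`f` is `α`-differentiable at `t` with conformable derivative `L` if
`(f (t + ε * t^(1-α)) - f t) / ε → L` as `ε → 0`. -/
def HasConformableDerivAt (α : ℝ) (f : ℝ → ℝ) (L t : ℝ) : Prop :=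
  Tendsto (fun ε : ℝ => (f (t + ε * t ^ (1 - α)) - f t) / ε) (𝓝[≠] (0 : ℝ)) (𝓝 L)

/-- Product rule: `T_α (f * g)(t) = f t * T_α g (t) + g t * T_α f (t)`. -/
theorem conformable_mul (α : ℝ) (hα : α ∈ Set.Ioc (0 : ℝ) 1)
    (t : ℝ) (ht : 0 < t) (f g : ℝ → ℝ) (Tf Tg : ℝ)
    (hf : HasConformableDerivAt α f Tf t)
    (hg : HasConformableDerivAt α g Tg t) :
    HasConformableDerivAt α (fun x => f x * g x) (f t * Tg + g t * Tf) t := by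
  unfold HasConformableDerivAt at *
  have hfc : Tendsto (fun ε : ℝ => f (t + ε * t ^ (1 - α))) (𝓝[≠] (0 : ℝ)) (𝓝 (f t)) := by
    have h1 : Tendsto (fun ε : ℝ =>
        ε * ((f (t + ε * t ^ (1 - α)) - f t) / ε)) (𝓝[≠] (0 : ℝ)) (𝓝 (0 * Tf)) :=
      Tendsto.mul (tendsto_id.mono_left nhdsWithin_le_nhds) hf
    have h2 : ∀ ε ∈ ({(0:ℝ)}ᶜ : Set ℝ),
        ε * ((f (t + ε * t ^ (1 - α)) - f t) / ε) = f (t + ε * t ^ (1 - α)) - f t := by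
      intro ε hε
      rw [mul_div_assoc'] ; exact mul_div_cancel_left₀ _ hε
    have h3 : Tendsto (fun ε : ℝ => f (t + ε * t ^ (1 - α)) - f t) (𝓝[≠] (0 : ℝ)) (𝓝 0) := by
      rw [zero_mul] at h1
      exact h1.congr' (eventually_nhdsWithin_of_forall h2)
    have := h3.add_const (f t)
    simpa using this
  have key : Tendsto (fun ε : ℝ =>
      f (t + ε * t ^ (1 - α)) * ((g (t + ε * t ^ (1 - α)) - g t) / ε)
        + g t * ((f (t + ε * t ^ (1 - α)) - f t) / ε)) (𝓝[≠] (0 : ℝ))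
      (𝓝 (f t * Tg + g t * Tf)) :=
    (hfc.mul hg).add (tendsto_const_nhds.mul hf)
  refine key.congr (fun ε => ?_)
  ring
end
end

section
/- Let α ∈ (0,1], let t > 0, and let f, g : [0,∞) → ℝ be α-differentiable at t with g(t) ≠ 0. Then the quotient f/g is α-differentiable at t and T_α(f/g)(t) = (g(t)·T_α(f)(t) − f(t)·T_α(g)(t)) / g(t)². -/
noncomputable section
open Real Filter Topology

/-- Quotient rule:
`T_α (f / g)(t) = (g t * T_α f (t) - f t * T_α g (t)) / (g t)^2`. -/
theorem conformable_div (α : ℝ) (hα : α ∈ Set.Ioc (0 : ℝ) 1)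
    (t : ℝ) (ht : 0 < t) (f g : ℝ → ℝ) (Tf Tg : ℝ)
    (hf : HasConformableDerivAt α f Tf t)
    (hg : HasConformableDerivAt α g Tg t)
    (hgt : g t ≠ 0) :
    HasConformableDerivAt α (fun x => f x / g x)
      ((g t * Tf - f t * Tg) / (g t) ^ 2) t := by
  set c := t ^ (1 - α) with hc
  have hε : Tendsto (fun ε : ℝ => ε) (𝓝[≠] (0 : ℝ)) (𝓝 0) :=
    tendsto_id.mono_left nhdsWithin_le_nhds
  -- g (t + ε c) tends to g t
  have hgc : Tendsto (fun ε : ℝ => g (t + ε * c)) (𝓝[≠] (0 : ℝ)) (𝓝 (g t)) := by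
    have h1 : Tendsto (fun ε : ℝ => (g (t + ε * c) - g t) / ε * ε + g t)
        (𝓝[≠] (0 : ℝ)) (𝓝 (Tg * 0 + g t)) := (hg.mul hε).add tendsto_const_nhds
    rw [mul_zero, zero_add] at h1
    refine h1.congr' ?_
    filter_upwards [self_mem_nhdsWithin] with ε (hne : ε ≠ 0)
    field_simp
    ring
  have hne : ∀ᶠ ε in 𝓝[≠] (0 : ℝ), g (t + ε * c) ≠ 0 :=
    hgc (isOpen_compl_singleton.mem_nhds hgt)
  have hmain : Tendsto (fun ε : ℝ =>
      (g t * ((f (t + ε * c) - f t) / ε) - f t * ((g (t + ε * c) - g t) / ε)) /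
        (g (t + ε * c) * g t)) (𝓝[≠] (0 : ℝ))
      (𝓝 ((g t * Tf - f t * Tg) / (g t * g t))) :=
    (((tendsto_const_nhds.mul hf).sub (tendsto_const_nhds.mul hg)).div
      (hgc.mul tendsto_const_nhds) (mul_ne_zero hgt hgt))
  have heq : ((g t * Tf - f t * Tg) / (g t * g t)) = (g t * Tf - f t * Tg) / (g t) ^ 2 := by
    rw [sq]
  rw [heq] at hmain
  refine hmain.congr' ?_
  filter_upwards [self_mem_nhdsWithin, hne] with ε (hεne : ε ≠ 0) hgne
  show _ = (f (t + ε * c) / g (t + ε * c) - f t / g t) / ε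
  field_simp
  ring
end
end

section
/- Let α ∈ (0,1] and λ ∈ ℝ. Suppose g : [0,∞) → ℝ is continuous on [0,∞), differentiable on (0,∞), and satisfies T_α(g)(t) = λ·g(t) for all t > 0 (equivalently, t^{1−α} g′(t) = λ g(t) for all t > 0). Then g(t) = g(0)·exp(λ t^α/α) for all t ≥ 0. In particular, the conformable eigenvalue problem T_α g = λ g with initial condition g(0) = c has the unique solution g(t) = c·exp(λ t^α/α). -/
noncomputable section
open Real Filter Topology

/-- If `f` has (ordinary) derivative `d` at `t > 0`, then its conformable derivative of
order `α` at `t` is `t^(1-α) * d`. -/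
lemma hasConformableDerivAt_of_hasDerivAt {α : ℝ} {f : ℝ → ℝ} {d t : ℝ} (ht : 0 < t)
    (hf : HasDerivAt f d t) : HasConformableDerivAt α f (t ^ (1 - α) * d) t := by
  have hc : (0:ℝ) < t ^ (1 - α) := Real.rpow_pos_of_pos ht _
  have hφ : HasDerivAt (fun ε : ℝ => f (t + ε * t ^ (1 - α))) (t ^ (1 - α) * d) 0 := by
    have hlin : HasDerivAt (fun ε : ℝ => t + ε * t ^ (1 - α)) (t ^ (1 - α)) 0 := by
      simpa using ((hasDerivAt_id (0:ℝ)).mul_const (t ^ (1 - α))).const_add t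
    have := HasDerivAt.comp (𝕜 := ℝ) 0
      (show HasDerivAt f d ((fun ε : ℝ => t + ε * t ^ (1 - α)) 0) by simpa using hf) hlin
    rw [mul_comm]; exact this
  have h2 := hasDerivAt_iff_tendsto_slope.mp hφ
  unfold HasConformableDerivAt
  refine h2.congr' ?_
  filter_upwards [self_mem_nhdsWithin] with ε hε
  simp [slope_def_field]

/-- Uniqueness for the conformable eigenvalue problem: if `g` is continuous on
`[0, ∞)`, differentiable on `(0, ∞)`, and `T_α g (t) = lam * g t` for all `t > 0`,
then `g t = g 0 * exp (lam * t^α / α)` for all `t ≥ 0`. In particular the problem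
`T_α g = lam * g`, `g 0 = c` has the unique solution `g t = c * exp (lam * t^α / α)`. -/
theorem conformable_eigenvalue_unique (α : ℝ) (hα : α ∈ Set.Ioc (0 : ℝ) 1)
    (lam : ℝ) (g : ℝ → ℝ)
    (hcont : ContinuousOn g (Set.Ici (0 : ℝ)))
    (hdiff : DifferentiableOn ℝ g (Set.Ioi (0 : ℝ)))
    (heig : ∀ t : ℝ, 0 < t → HasConformableDerivAt α g (lam * g t) t) :
    ∀ t : ℝ, 0 ≤ t → g t = g 0 * Real.exp (lam * t ^ α / α) := by
  obtain ⟨hα0, hα1⟩ := hα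
  -- the auxiliary function
  set E : ℝ → ℝ := fun t => Real.exp (-(lam * t ^ α / α)) with hE
  set h : ℝ → ℝ := fun t => g t * E t with hh
  -- ordinary derivative of g on (0, ∞)
  have hderiv : ∀ t : ℝ, 0 < t → HasDerivAt g (lam * g t * t ^ (α - 1)) t := by
    intro t ht
    have hmem : t ∈ Set.Ioi (0:ℝ) := ht
    have hg : HasDerivAt g (deriv g t) t := by
      have := (hdiff t hmem).differentiableAt (Ioi_mem_nhds ht)
      exact this.hasDerivAt
    have hconf := hasConformableDerivAt_of_hasDerivAt (α := α) ht hg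
    have huniq : t ^ (1 - α) * deriv g t = lam * g t :=
      tendsto_nhds_unique hconf (heig t ht)
    have htne : t ^ (1 - α) ≠ 0 := (Real.rpow_pos_of_pos ht _).ne'
    have : deriv g t = lam * g t * t ^ (α - 1) := by
      have hinv : t ^ (α - 1) = (t ^ (1 - α))⁻¹ := by
        rw [← Real.rpow_neg ht.le]; ring_nf
      rw [hinv, ← huniq, mul_comm (t ^ (1 - α)), mul_assoc, mul_inv_cancel₀ htne, mul_one]
    rw [← this]; exact hg
  -- derivative of h is zero on (0, ∞)
  have hhderiv : ∀ t : ℝ, 0 < t → HasDerivAt h 0 t := by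
    intro t ht
    have hpow : HasDerivAt (fun s : ℝ => s ^ α) (α * t ^ (α - 1)) t :=
      Real.hasDerivAt_rpow_const (Or.inl ht.ne')
    have hEder : HasDerivAt E (-(lam * t ^ (α - 1)) * E t) t := by
      have hin : HasDerivAt (fun s : ℝ => -(lam * s ^ α / α)) (-(lam * t ^ (α - 1))) t := by
        have := ((hpow.const_mul lam).div_const α).neg
        refine this.congr_deriv ?_
        field_simp
      have := hin.exp
      rw [hE]
      convert this using 1
      ring
    have := (hderiv t ht).mul hEder
    refine this.congr_deriv ?_
    ring
  -- h is constant on (0, ∞): h t = h s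
  have hconst : ∀ t s : ℝ, 0 < s → s ≤ t → h t = h s := by
    intro t s hs hst
    have hcont' : ContinuousOn h (Set.Icc s t) := by
      intro x hx
      exact ((hhderiv x (lt_of_lt_of_le hs hx.1)).continuousAt).continuousWithinAt
    have := constant_of_has_deriv_right_zero hcont' (fun x hx =>
      (hhderiv x (lt_of_lt_of_le hs hx.1)).hasDerivWithinAt)
    exact this t ⟨hst, le_rfl⟩
  -- continuity of h on [0, ∞)
  have hEcont : Continuous E := by
    apply Real.continuous_exp.comp
    exact ((continuous_const.mul (Real.continuous_rpow_const hα0.le)).div_const α).neg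
  have hhcont : ContinuousOn h (Set.Ici (0:ℝ)) := hcont.mul hEcont.continuousOn
  -- extend constancy to 0 by continuity
  have hkey : ∀ t : ℝ, 0 < t → h t = h 0 := by
    intro t ht
    have h1 : Tendsto h (𝓝[>] (0:ℝ)) (𝓝 (h 0)) := by
      have := (hhcont 0 Set.self_mem_Ici).tendsto
      exact this.mono_left (nhdsWithin_mono _ Set.Ioi_subset_Ici_self)
    have h2 : Tendsto h (𝓝[>] (0:ℝ)) (𝓝 (h t)) := by
      have heq : ∀ᶠ s in 𝓝[>] (0:ℝ), h t = h s := by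
        filter_upwards [self_mem_nhdsWithin, Ioo_mem_nhdsGT ht]
          with s hs hs' using hconst t s hs hs'.2.le
      exact tendsto_const_nhds.congr' heq
    exact tendsto_nhds_unique h2 h1
  -- conclude
  intro t ht
  rcases eq_or_lt_of_le ht with rfl | htpos
  · simp [Real.zero_rpow hα0.ne']
  · have := hkey t htpos
    have hE0 : E 0 = 1 := by simp [hE, Real.zero_rpow hα0.ne']
    have hEt : E t * Real.exp (lam * t ^ α / α) = 1 := by
      rw [hE, ← Real.exp_add]; simp
    have : g t * E t = g 0 := by simpa [hh, hE0] using this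
    calc g t = g t * (E t * Real.exp (lam * t ^ α / α)) := by rw [hEt, mul_one]
      _ = (g t * E t) * Real.exp (lam * t ^ α / α) := by ring
      _ = g 0 * Real.exp (lam * t ^ α / α) := by rw [this]
end
end

section
/- Let d ≥ 1, H ∈ (0,1/2), and define p(t,x,y) = (2π t^{2H})^{−d/2} exp(−‖x−y‖²/(2 t^{2H})) for t > 0 and x, y ∈ ℝ^d. Then for every t > 0 and x, y ∈ ℝ^d, the conformable fractional derivative of order 2H in the t variable satisfies T_{2H} p(t,x,y) = H Δ_x p(t,x,y), where Δ_x denotes the Laplacian in the x variable. -/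
noncomputable section
open Real Filter Topology

/-- The Laplacian of `f : ℝ^d → ℝ` at `x`: the sum over the coordinate
directions of the second partial derivatives. -/
def laplacian {d : ℕ} (f : EuclideanSpace ℝ (Fin d) → ℝ)
    (x : EuclideanSpace ℝ (Fin d)) : ℝ :=
  ∑ j : Fin d,
    fderiv ℝ (fun y => fderiv ℝ f y (EuclideanSpace.single j 1)) x
      (EuclideanSpace.single j 1)

/-- The transition density of fractional Brownian motion of Hurst index `H`:
the Gaussian density with mean `x` and covariance `t^(2H)` times the identity. -/
def fbmKernel (d : ℕ) (H : ℝ) (t : ℝ) (x y : EuclideanSpace ℝ (Fin d)) : ℝ :=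
  (2 * Real.pi * t ^ (2 * H)) ^ (-(d : ℝ) / 2) *
    Real.exp (-‖x - y‖ ^ 2 / (2 * t ^ (2 * H)))

/-- First spatial derivative of the fbm kernel. -/
lemma fbm_hasFDerivAt (d : ℕ) (H t : ℝ) (y z : EuclideanSpace ℝ (Fin d)) :
    HasFDerivAt (fun w => fbmKernel d H t w y)
      ((fbmKernel d H t z y * -(t ^ (2 * H))⁻¹) • innerSL ℝ (z - y)) z := by
  have hfun : (fun w => fbmKernel d H t w y)
      = fun w : EuclideanSpace ℝ (Fin d) =>
        (2 * Real.pi * t ^ (2 * H)) ^ (-(d : ℝ) / 2) *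
          Real.exp (‖w - y‖ ^ 2 * (-(2 * t ^ (2 * H))⁻¹)) := by
    funext w
    simp only [fbmKernel]
    congr 1
    ring
  have h1 : HasFDerivAt (fun w : EuclideanSpace ℝ (Fin d) => ‖w - y‖ ^ 2)
      (2 • (innerSL ℝ (z - y)).comp (ContinuousLinearMap.id ℝ _)) z :=
    ((hasFDerivAt_id z).sub_const y).norm_sq
  have h2 := ((h1.mul_const (-(2 * t ^ (2 * H))⁻¹)).exp).const_mul
    ((2 * Real.pi * t ^ (2 * H)) ^ (-(d : ℝ) / 2))
  rw [hfun]
  refine h2.congr_fderiv ?_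
  ext w
  simp only [ContinuousLinearMap.smul_apply, ContinuousLinearMap.coe_smul',
    Pi.smul_apply, ContinuousLinearMap.comp_apply, ContinuousLinearMap.coe_id', id_eq,
    innerSL_apply_apply, smul_eq_mul, fbmKernel]
  have harg : -‖z - y‖ ^ 2 / (2 * t ^ (2 * H)) = ‖z - y‖ ^ 2 * (-(2 * t ^ (2 * H))⁻¹) := by
    ring
  rw [harg]
  ring

lemma fbm_fderiv_apply (d : ℕ) (H t : ℝ) (y z : EuclideanSpace ℝ (Fin d)) (j : Fin d) :
    fderiv ℝ (fun w => fbmKernel d H t w y) z (EuclideanSpace.single j 1)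
      = fbmKernel d H t z y * (-(t ^ (2 * H))⁻¹ * (z j - y j)) := by
  rw [(fbm_hasFDerivAt d H t y z).fderiv]
  simp only [ContinuousLinearMap.smul_apply, innerSL_apply_apply, smul_eq_mul]
  rw [EuclideanSpace.inner_single_right]
  simp only [RCLike.star_def, conj_trivial, one_mul, PiLp.sub_apply]
  ring

lemma fbm_second (d : ℕ) (H t : ℝ) (y x : EuclideanSpace ℝ (Fin d)) (j : Fin d) :
    fderiv ℝ (fun w => fderiv ℝ (fun w' => fbmKernel d H t w' y) w
        (EuclideanSpace.single j 1)) x (EuclideanSpace.single j 1)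
      = fbmKernel d H t x y *
          ((x j - y j) ^ 2 * ((t ^ (2 * H))⁻¹) ^ 2 - (t ^ (2 * H))⁻¹) := by
  have hfun : (fun w => fderiv ℝ (fun w' => fbmKernel d H t w' y) w
        (EuclideanSpace.single j 1))
      = fun w : EuclideanSpace ℝ (Fin d) =>
        fbmKernel d H t w y * (-(t ^ (2 * H))⁻¹ * (w j - y j)) :=
    funext fun w => fbm_fderiv_apply d H t y w j
  rw [hfun]
  have h2 : HasFDerivAt (fun w : EuclideanSpace ℝ (Fin d) => -(t ^ (2 * H))⁻¹ * (w j - y j))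
      ((-(t ^ (2 * H))⁻¹) • (EuclideanSpace.proj j : EuclideanSpace ℝ (Fin d) →L[ℝ] ℝ)) x := by
    have := (((EuclideanSpace.proj (𝕜 := ℝ) j).hasFDerivAt
      (x := x)).sub_const (y j)).const_mul (-(t ^ (2 * H))⁻¹)
    simpa [PiLp.proj_apply] using this
  rw [(show HasFDerivAt (fun w : EuclideanSpace ℝ (Fin d) => fbmKernel d H t w y * (-(t ^ (2 * H))⁻¹ * (w j - y j))) _ x from (fbm_hasFDerivAt d H t y x).mul h2).fderiv]
  simp only [ContinuousLinearMap.add_apply, ContinuousLinearMap.smul_apply, smul_eq_mul,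
    innerSL_apply_apply]
  rw [EuclideanSpace.inner_single_right]
  simp only [RCLike.star_def, conj_trivial, one_mul, PiLp.sub_apply,
    PiLp.proj_apply, EuclideanSpace.single_apply, if_pos rfl, if_true]
  ring

lemma fbm_laplacian (d : ℕ) (H t : ℝ) (x y : EuclideanSpace ℝ (Fin d)) :
    laplacian (fun z => fbmKernel d H t z y) x
      = fbmKernel d H t x y *
          (‖x - y‖ ^ 2 * ((t ^ (2 * H))⁻¹) ^ 2 - d * (t ^ (2 * H))⁻¹) := by
  have hnorm : ‖x - y‖ ^ 2 = ∑ j : Fin d, (x j - y j) ^ 2 := by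
    rw [EuclideanSpace.norm_eq, Real.sq_sqrt (by positivity)]
    simp [PiLp.sub_apply, sq_abs]
  unfold laplacian
  simp only [fbm_second]
  rw [← Finset.mul_sum, Finset.sum_sub_distrib, ← Finset.sum_mul, Finset.sum_const,
    Finset.card_univ, Fintype.card_fin, hnorm]
  ring

lemma fbm_hasDerivAt_time (d : ℕ) (H t : ℝ) (hH : 0 < H) (ht : 0 < t)
    (x y : EuclideanSpace ℝ (Fin d)) :
    HasDerivAt (fun s : ℝ => fbmKernel d H s x y)
      (2 * H * t ^ (2 * H - 1) * fbmKernel d H t x y *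
        (‖x - y‖ ^ 2 / (2 * (t ^ (2 * H)) ^ 2) - d / (2 * t ^ (2 * H)))) t := by
  set u : ℝ := t ^ (2 * H) with hudef
  have hu : (0 : ℝ) < u := Real.rpow_pos_of_pos ht _
  have h2pu : (0 : ℝ) < 2 * Real.pi * u := by positivity
  have hup : HasDerivAt (fun s : ℝ => s ^ (2 * H)) (2 * H * t ^ (2 * H - 1)) t := by
    simpa [mul_comm] using Real.hasDerivAt_rpow_const (p := 2 * H) (Or.inl ht.ne')
  have hA : HasDerivAt (fun s : ℝ => (2 * Real.pi * s ^ (2 * H)) ^ (-(d : ℝ) / 2))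
      ((2 * Real.pi * (2 * H * t ^ (2 * H - 1))) * (-(d : ℝ) / 2) *
        (2 * Real.pi * u) ^ (-(d : ℝ) / 2 - 1)) t :=
    (hup.const_mul (2 * Real.pi)).rpow_const (Or.inl h2pu.ne')
  have hden : HasDerivAt (fun s : ℝ => 2 * s ^ (2 * H)) (2 * (2 * H * t ^ (2 * H - 1))) t :=
    hup.const_mul 2
  have hE0 : HasDerivAt (fun s : ℝ => -‖x - y‖ ^ 2 / (2 * s ^ (2 * H)))
      ((0 * (2 * u) - (-‖x - y‖ ^ 2) * (2 * (2 * H * t ^ (2 * H - 1)))) / (2 * u) ^ 2) t :=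
    (hasDerivAt_const t (-‖x - y‖ ^ 2)).div hden (by positivity)
  have hE := hE0.exp
  have h := hA.mul hE
  have hfun : (fun s : ℝ => fbmKernel d H s x y)
      = fun s : ℝ => (2 * Real.pi * s ^ (2 * H)) ^ (-(d : ℝ) / 2) *
          Real.exp (-‖x - y‖ ^ 2 / (2 * s ^ (2 * H))) := by
    funext s; rfl
  rw [hfun]
  refine h.congr_deriv ?_
  have hsub : (2 * Real.pi * u) ^ (-(d : ℝ) / 2 - 1)
      = (2 * Real.pi * u) ^ (-(d : ℝ) / 2) / (2 * Real.pi * u) := by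
    rw [Real.rpow_sub h2pu, Real.rpow_one]
  rw [hsub]
  simp only [fbmKernel, ← hudef]
  field_simp
  ring

/-- The fBm transition density satisfies the conformable heat equation
`T_{2H} p(t,x,y) = H Δₓ p(t,x,y)`. -/
theorem fbmKernel_conformableDeriv_eq (d : ℕ) (hd : 1 ≤ d) (H : ℝ)
    (hH : H ∈ Set.Ioo (0 : ℝ) (1 / 2)) :
    ∀ t : ℝ, 0 < t → ∀ x y : EuclideanSpace ℝ (Fin d),
      HasConformableDerivAt (2 * H) (fun s : ℝ => fbmKernel d H s x y)
        (H * laplacian (fun z => fbmKernel d H t z y) x) t := by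
  intro t ht x y
  obtain ⟨hH0, hH2⟩ := hH
  set u : ℝ := t ^ (2 * H) with hudef
  have hu : (0 : ℝ) < u := Real.rpow_pos_of_pos ht _
  set c : ℝ := t ^ (1 - 2 * H) with hcdef
  have hphi : HasDerivAt (fun ε : ℝ => t + ε * c) c 0 := by
    simpa using ((hasDerivAt_id (0 : ℝ)).mul_const c).const_add t
  have htime := fbm_hasDerivAt_time d H t hH0 ht x y
  have hcomp : HasDerivAt (fun ε : ℝ => fbmKernel d H (t + ε * c) x y)
      ((2 * H * t ^ (2 * H - 1) * fbmKernel d H t x y *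
        (‖x - y‖ ^ 2 / (2 * u ^ 2) - d / (2 * u))) * c) 0 := by
    have h00 : t + (0 : ℝ) * c = t := by ring
    have htime' : HasDerivAt (fun s : ℝ => fbmKernel d H s x y)
        (2 * H * t ^ (2 * H - 1) * fbmKernel d H t x y *
          (‖x - y‖ ^ 2 / (2 * u ^ 2) - d / (2 * u))) (t + (0 : ℝ) * c) := by
      rw [h00]; exact htime
    have hC : HasDerivAt ((fun s : ℝ => fbmKernel d H s x y) ∘ (fun ε : ℝ => t + ε * c))
        ((2 * H * t ^ (2 * H - 1) * fbmKernel d H t x y *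
          (‖x - y‖ ^ 2 / (2 * u ^ 2) - d / (2 * u))) * c) 0 :=
      HasDerivAt.comp (h := fun ε : ℝ => t + ε * c) (h₂ := fun s : ℝ => fbmKernel d H s x y)
        0 htime' hphi
    exact hC
  have hkey : t ^ (2 * H - 1) * c = 1 := by
    rw [hcdef, ← Real.rpow_add ht]
    norm_num
  have hslope := hcomp.tendsto_slope_zero
  have hL : (2 * H * t ^ (2 * H - 1) * fbmKernel d H t x y *
        (‖x - y‖ ^ 2 / (2 * u ^ 2) - d / (2 * u))) * c
      = H * laplacian (fun z => fbmKernel d H t z y) x := by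
    rw [fbm_laplacian, ← hudef]
    have : (2 * H * t ^ (2 * H - 1) * fbmKernel d H t x y *
        (‖x - y‖ ^ 2 / (2 * u ^ 2) - ↑d / (2 * u))) * c
        = (t ^ (2 * H - 1) * c) * (2 * H * fbmKernel d H t x y *
          (‖x - y‖ ^ 2 / (2 * u ^ 2) - ↑d / (2 * u))) := by ring
    rw [this, hkey, one_mul]
    field_simp
  rw [HasConformableDerivAt, ← hL]
  refine hslope.congr fun ε => ?_
  simp [div_eq_inv_mul, hcdef]
end
end

section
/- Let α ∈ (0,1), L > 0, and let (b_n)_{n≥1} be a sequence of real numbers with Σ_{n=1}^∞ n² |b_n| < ∞. Define u(t,x) = Σ_{n=1}^∞ b_n exp(−(nπ/L)² t^α/α)·sin(nπx/L) for t ≥ 0 and x ∈ [0,L]. Then: (i) the series converges absolutely for all t ≥ 0 and x ∈ [0,L]; (ii) u(t,0) = u(t,L) = 0 for all t ≥ 0; (iii) u(0,x) = Σ_{n=1}^∞ b_n sin(nπx/L); and (iv) for every t > 0 and every x ∈ (0,L), the conformable fractional derivative of order α in t satisfies T_α u(t,x) = ∂²u/∂x²(t,x). Thus u solves the conformable fractional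 heat equation on [0,L] with zero Dirichlet boundary conditions and initial data given by the sine series with coefficients b_n. -/
noncomputable section
open Real Filter Topology

/-- Eigenfunction-expansion solution of the conformable fractional heat equation
on `[0,L]` with zero Dirichlet boundary conditions: given coefficients `b` with
`∑ n² |bₙ| < ∞`, the series
`u(t,x) = ∑_{n≥1} bₙ exp(-(nπ/L)² tᵅ/α) sin(nπx/L)`
converges absolutely, vanishes at `x = 0` and `x = L`, has initial data the sine
series with coefficients `bₙ`, and satisfies `T_α u = ∂²u/∂x²` for `t > 0` and
`x ∈ (0,L)`. -/
theorem conformable_heat_series (α : ℝ) (hα : α ∈ Set.Ioo (0 : ℝ) 1)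
    (L : ℝ) (hL : 0 < L) (b : ℕ → ℝ)
    (hb : Summable (fun n : ℕ => ((n : ℝ) + 1) ^ 2 * |b (n + 1)|))
    (u : ℝ → ℝ → ℝ)
    (hu : ∀ t x : ℝ, u t x =
      ∑' n : ℕ, b (n + 1) *
        Real.exp (-(((n : ℝ) + 1) * Real.pi / L) ^ 2 * t ^ α / α) *
          Real.sin (((n : ℝ) + 1) * Real.pi * x / L)) :
    (∀ t : ℝ, 0 ≤ t → ∀ x ∈ Set.Icc (0 : ℝ) L,
        Summable (fun n : ℕ => |b (n + 1) *
          Real.exp (-(((n : ℝ) + 1) * Real.pi / L) ^ 2 * t ^ α / α) *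
            Real.sin (((n : ℝ) + 1) * Real.pi * x / L)|)) ∧
      (∀ t : ℝ, 0 ≤ t → u t 0 = 0 ∧ u t L = 0) ∧
      (∀ x : ℝ, u 0 x =
        ∑' n : ℕ, b (n + 1) * Real.sin (((n : ℝ) + 1) * Real.pi * x / L)) ∧
      ∀ t : ℝ, 0 < t → ∀ x ∈ Set.Ioo (0 : ℝ) L,
        HasConformableDerivAt α (fun s : ℝ => u s x)
          (deriv (deriv (fun z : ℝ => u t z)) x) t := by
  obtain ⟨hα0, hα1⟩ := hα
  have hαne : α ≠ 0 := ne_of_gt hα0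
  have hπ : (0:ℝ) < Real.pi := Real.pi_pos
  have hbs : Summable (fun n : ℕ => |b (n+1)|) := by
    refine Summable.of_nonneg_of_le (fun n => abs_nonneg _) (fun n => ?_) hb
    have h1 : (1:ℝ) ≤ ((n:ℝ)+1)^2 := by nlinarith [Nat.cast_nonneg (α := ℝ) n]
    nlinarith [abs_nonneg (b (n+1))]
  -- absolute value of each term bounded by |b (n+1)|
  have hterm : ∀ t : ℝ, 0 ≤ t → ∀ x : ℝ, ∀ n : ℕ,
      |b (n + 1) * Real.exp (-(((n : ℝ) + 1) * Real.pi / L) ^ 2 * t ^ α / α) *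
        Real.sin (((n : ℝ) + 1) * Real.pi * x / L)| ≤ |b (n+1)| := by
    intro t ht x n
    have hexp : -(((n : ℝ) + 1) * Real.pi / L) ^ 2 * t ^ α / α ≤ 0 := by
      have h1 : (0:ℝ) ≤ t ^ α := Real.rpow_nonneg ht α
      have h2 : (0:ℝ) ≤ (((n : ℝ) + 1) * Real.pi / L) ^ 2 := sq_nonneg _
      apply div_nonpos_of_nonpos_of_nonneg _ (le_of_lt hα0)
      nlinarith
    have hE : |Real.exp (-(((n : ℝ) + 1) * Real.pi / L) ^ 2 * t ^ α / α)| ≤ 1 := by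
      rw [abs_of_pos (Real.exp_pos _)]
      calc Real.exp _ ≤ Real.exp 0 := Real.exp_le_exp.mpr hexp
        _ = 1 := Real.exp_zero
    have hS := Real.abs_sin_le_one (((n : ℝ) + 1) * Real.pi * x / L)
    rw [abs_mul, abs_mul]
    have h0S : (0:ℝ) ≤ |Real.sin (((n : ℝ) + 1) * Real.pi * x / L)| := abs_nonneg _
    have hb0 : (0:ℝ) ≤ |b (n+1)| := abs_nonneg _
    calc |b (n+1)| * |Real.exp (-(((n : ℝ) + 1) * Real.pi / L) ^ 2 * t ^ α / α)| *
          |Real.sin (((n : ℝ) + 1) * Real.pi * x / L)|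
        ≤ |b (n+1)| * 1 * |Real.sin (((n : ℝ) + 1) * Real.pi * x / L)| :=
          mul_le_mul_of_nonneg_right (mul_le_mul_of_nonneg_left hE hb0) h0S
      _ = |b (n+1)| * |Real.sin (((n : ℝ) + 1) * Real.pi * x / L)| := by ring
      _ ≤ |b (n+1)| * 1 := mul_le_mul_of_nonneg_left hS hb0
      _ = |b (n+1)| := mul_one _
  have hsum1 : ∀ t : ℝ, 0 ≤ t → ∀ x : ℝ,
      Summable (fun n : ℕ => |b (n + 1) *
        Real.exp (-(((n : ℝ) + 1) * Real.pi / L) ^ 2 * t ^ α / α) *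
          Real.sin (((n : ℝ) + 1) * Real.pi * x / L)|) := by
    intro t ht x
    exact Summable.of_nonneg_of_le (fun n => abs_nonneg _) (fun n => hterm t ht x n) hbs
  refine ⟨fun t ht x _ => hsum1 t ht x, ?_, ?_, ?_⟩
  · -- boundary conditions
    intro t ht
    constructor
    · rw [hu]; simp
    · rw [hu]
      have hz : ∀ n : ℕ, Real.sin (((n : ℝ) + 1) * Real.pi * L / L) = 0 := by
        intro n
        rw [mul_div_assoc, div_self (ne_of_gt hL), mul_one]
        have := Real.sin_nat_mul_pi (n+1)
        push_cast at this
        exact this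
      simp [hz]
  · -- initial condition
    intro x
    rw [hu]
    refine tsum_congr fun n => ?_
    rw [Real.zero_rpow hαne]
    simp
  · -- the PDE
    intro t ht x hx
    -- the time series
    have httwo : (0:ℝ) < t/2 := by linarith
    have htmem : t ∈ Set.Ioo (t/2) (t+1) := ⟨by linarith, by linarith⟩
    -- summable bound for time derivatives
    have hu2 : Summable (fun n : ℕ =>
        |b (n+1)| * (((n : ℝ) + 1) * Real.pi / L) ^ 2 * (t/2) ^ (α-1)) := by
      refine ((hb.mul_left ((Real.pi/L)^2 * (t/2)^(α-1))).congr fun n => ?_)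
      ring
    -- derivative facts for individual time functions
    have hgderiv : ∀ n : ℕ, ∀ s : ℝ, 0 < s →
        HasDerivAt (fun s : ℝ => b (n + 1) *
          Real.exp (-(((n : ℝ) + 1) * Real.pi / L) ^ 2 * s ^ α / α) *
            Real.sin (((n : ℝ) + 1) * Real.pi * x / L))
          (b (n + 1) *
            (Real.exp (-(((n : ℝ) + 1) * Real.pi / L) ^ 2 * s ^ α / α) *
              (-(((n : ℝ) + 1) * Real.pi / L) ^ 2 * s ^ (α-1))) *
            Real.sin (((n : ℝ) + 1) * Real.pi * x / L)) s := by
      intro n s hs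
      have h1 : HasDerivAt (fun y : ℝ => y ^ α) (α * s ^ (α-1)) s :=
        Real.hasDerivAt_rpow_const (Or.inl (ne_of_gt hs))
      have h2 : HasDerivAt (fun y : ℝ => -(((n : ℝ) + 1) * Real.pi / L) ^ 2 * y ^ α / α)
          (-(((n : ℝ) + 1) * Real.pi / L) ^ 2 * s ^ (α-1)) s := by
        have heq : (fun y : ℝ => -(((n : ℝ) + 1) * Real.pi / L) ^ 2 * y ^ α / α)
            = fun y : ℝ => (-(((n : ℝ) + 1) * Real.pi / L) ^ 2 / α) * y ^ α := by
          funext y; ring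
        rw [heq]
        have := h1.const_mul (-(((n : ℝ) + 1) * Real.pi / L) ^ 2 / α)
        rw [← mul_assoc, div_mul_cancel₀ _ hαne] at this
        exact this
      exact (h2.exp.const_mul (b (n+1))).mul_const _
    -- bound for time derivatives on the interval
    have hgbound : ∀ n : ℕ, ∀ s : ℝ, s ∈ Set.Ioo (t/2) (t+1) →
        ‖b (n + 1) *
            (Real.exp (-(((n : ℝ) + 1) * Real.pi / L) ^ 2 * s ^ α / α) *
              (-(((n : ℝ) + 1) * Real.pi / L) ^ 2 * s ^ (α-1))) *
            Real.sin (((n : ℝ) + 1) * Real.pi * x / L)‖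
          ≤ |b (n+1)| * (((n : ℝ) + 1) * Real.pi / L) ^ 2 * (t/2) ^ (α-1) := by
      intro n s hs
      have hs0 : (0:ℝ) < s := lt_trans httwo hs.1
      have hrp : s ^ (α-1) ≤ (t/2) ^ (α-1) :=
        Real.rpow_le_rpow_of_nonpos httwo (le_of_lt hs.1) (by linarith)
      have hrp0 : (0:ℝ) ≤ s ^ (α-1) := Real.rpow_nonneg (le_of_lt hs0) _
      have hexp : -(((n : ℝ) + 1) * Real.pi / L) ^ 2 * s ^ α / α ≤ 0 := by
        have h1 : (0:ℝ) ≤ s ^ α := Real.rpow_nonneg (le_of_lt hs0) α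
        have h2 : (0:ℝ) ≤ (((n : ℝ) + 1) * Real.pi / L) ^ 2 := sq_nonneg _
        apply div_nonpos_of_nonpos_of_nonneg _ (le_of_lt hα0)
        nlinarith
      have hE1 : Real.exp (-(((n : ℝ) + 1) * Real.pi / L) ^ 2 * s ^ α / α) ≤ 1 := by
        calc Real.exp _ ≤ Real.exp 0 := Real.exp_le_exp.mpr hexp
          _ = 1 := Real.exp_zero
      have hE0 : (0:ℝ) < Real.exp (-(((n : ℝ) + 1) * Real.pi / L) ^ 2 * s ^ α / α) :=
        Real.exp_pos _
      have hS := Real.abs_sin_le_one (((n : ℝ) + 1) * Real.pi * x / L)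
      have hS0 : (0:ℝ) ≤ |Real.sin (((n : ℝ) + 1) * Real.pi * x / L)| := abs_nonneg _
      have hC : (0:ℝ) ≤ (((n : ℝ) + 1) * Real.pi / L) ^ 2 := sq_nonneg _
      rw [Real.norm_eq_abs, abs_mul, abs_mul, abs_mul, abs_mul, abs_neg, abs_of_nonneg hC,
        abs_of_nonneg hrp0, abs_of_pos hE0]
      have hb0 : (0:ℝ) ≤ |b (n+1)| := abs_nonneg _
      have hA : Real.exp (-(((n : ℝ) + 1) * Real.pi / L) ^ 2 * s ^ α / α) *
          ((((n : ℝ) + 1) * Real.pi / L) ^ 2 * s ^ (α-1))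
          ≤ (((n : ℝ) + 1) * Real.pi / L) ^ 2 * (t/2) ^ (α-1) := by
        have := mul_le_mul hE1 (mul_le_mul_of_nonneg_left hrp hC)
          (mul_nonneg hC hrp0) one_pos.le
        linarith [this]
      have haneg : (0:ℝ) ≤ |b (n+1)| * (Real.exp (-(((n : ℝ) + 1) * Real.pi / L) ^ 2 * s ^ α / α) *
          ((((n : ℝ) + 1) * Real.pi / L) ^ 2 * s ^ (α-1))) :=
        mul_nonneg hb0 (mul_nonneg hE0.le (mul_nonneg hC hrp0))
      calc |b (n+1)| * (Real.exp (-(((n : ℝ) + 1) * Real.pi / L) ^ 2 * s ^ α / α) *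
            ((((n : ℝ) + 1) * Real.pi / L) ^ 2 * s ^ (α-1))) *
            |Real.sin (((n : ℝ) + 1) * Real.pi * x / L)|
          ≤ |b (n+1)| * (Real.exp (-(((n : ℝ) + 1) * Real.pi / L) ^ 2 * s ^ α / α) *
            ((((n : ℝ) + 1) * Real.pi / L) ^ 2 * s ^ (α-1))) * 1 :=
            mul_le_mul_of_nonneg_left hS haneg
        _ = |b (n+1)| * (Real.exp (-(((n : ℝ) + 1) * Real.pi / L) ^ 2 * s ^ α / α) *
            ((((n : ℝ) + 1) * Real.pi / L) ^ 2 * s ^ (α-1))) := mul_one _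
        _ ≤ |b (n+1)| * ((((n : ℝ) + 1) * Real.pi / L) ^ 2 * (t/2) ^ (α-1)) :=
            mul_le_mul_of_nonneg_left hA hb0
        _ = |b (n+1)| * (((n : ℝ) + 1) * Real.pi / L) ^ 2 * (t/2) ^ (α-1) := by ring
    -- summability of the time series at t
    have hg0 : Summable (fun n : ℕ => b (n + 1) *
        Real.exp (-(((n : ℝ) + 1) * Real.pi / L) ^ 2 * t ^ α / α) *
          Real.sin (((n : ℝ) + 1) * Real.pi * x / L)) := by
      rw [← summable_abs_iff]
      exact hsum1 t (le_of_lt ht) x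
    -- the t-derivative of the series
    have hF : HasDerivAt
        (fun s : ℝ => ∑' n : ℕ, b (n + 1) *
          Real.exp (-(((n : ℝ) + 1) * Real.pi / L) ^ 2 * s ^ α / α) *
            Real.sin (((n : ℝ) + 1) * Real.pi * x / L))
        (∑' n : ℕ, b (n + 1) *
          (Real.exp (-(((n : ℝ) + 1) * Real.pi / L) ^ 2 * t ^ α / α) *
            (-(((n : ℝ) + 1) * Real.pi / L) ^ 2 * t ^ (α-1))) *
          Real.sin (((n : ℝ) + 1) * Real.pi * x / L)) t := by
      refine hasDerivAt_tsum_of_isPreconnected hu2 isOpen_Ioo isPreconnected_Ioo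
        (fun n s hs => hgderiv n s (lt_trans httwo hs.1))
        (fun n s hs => hgbound n s hs) htmem hg0 htmem
    have hut : (fun s : ℝ => u s x) = fun s : ℝ => ∑' n : ℕ, b (n + 1) *
        Real.exp (-(((n : ℝ) + 1) * Real.pi / L) ^ 2 * s ^ α / α) *
          Real.sin (((n : ℝ) + 1) * Real.pi * x / L) := by
      funext s; exact hu s x
    -- spatial derivatives
    have hux : (fun z : ℝ => u t z) = fun z : ℝ => ∑' n : ℕ,
        b (n + 1) * Real.exp (-(((n : ℝ) + 1) * Real.pi / L) ^ 2 * t ^ α / α) *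
          Real.sin ((((n : ℝ) + 1) * Real.pi / L) * z) := by
      funext z
      rw [hu]
      refine tsum_congr fun n => ?_
      rw [show ((n : ℝ) + 1) * Real.pi * z / L = (((n : ℝ) + 1) * Real.pi / L) * z by ring]
    have hu1' : Summable (fun n : ℕ => (Real.pi/L) * (((n : ℝ) + 1) ^ 2 * |b (n+1)|)) :=
      hb.mul_left _
    have hu2' : Summable (fun n : ℕ => (Real.pi/L)^2 * (((n : ℝ) + 1) ^ 2 * |b (n+1)|)) :=
      hb.mul_left _
    have hcn : ∀ n : ℕ, (0:ℝ) < ((n : ℝ) + 1) * Real.pi / L := by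
      intro n
      apply div_pos _ hL
      positivity
    have hEt1 : ∀ n : ℕ, Real.exp (-(((n : ℝ) + 1) * Real.pi / L) ^ 2 * t ^ α / α) ≤ 1 := by
      intro n
      have h1 : (0:ℝ) ≤ t ^ α := Real.rpow_nonneg (le_of_lt ht) α
      have h2 : (0:ℝ) ≤ (((n : ℝ) + 1) * Real.pi / L) ^ 2 := sq_nonneg _
      calc Real.exp _ ≤ Real.exp 0 := by
            apply Real.exp_le_exp.mpr
            apply div_nonpos_of_nonpos_of_nonneg _ (le_of_lt hα0)
            nlinarith
        _ = 1 := Real.exp_zero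
    have hinner : ∀ (n : ℕ) (z : ℝ), HasDerivAt (fun z : ℝ => (((n : ℝ) + 1) * Real.pi / L) * z)
        (((n : ℝ) + 1) * Real.pi / L) z := by
      intro n z
      simpa using (hasDerivAt_id z).const_mul (((n : ℝ) + 1) * Real.pi / L)
    have hp : ∀ (n : ℕ) (z : ℝ), HasDerivAt
        (fun z : ℝ => b (n + 1) * Real.exp (-(((n : ℝ) + 1) * Real.pi / L) ^ 2 * t ^ α / α) *
          Real.sin ((((n : ℝ) + 1) * Real.pi / L) * z))
        (b (n + 1) * Real.exp (-(((n : ℝ) + 1) * Real.pi / L) ^ 2 * t ^ α / α) *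
          (Real.cos ((((n : ℝ) + 1) * Real.pi / L) * z) * (((n : ℝ) + 1) * Real.pi / L))) z := by
      intro n z
      exact ((hinner n z).sin).const_mul _
    have hpbound : ∀ (n : ℕ) (z : ℝ),
        ‖b (n + 1) * Real.exp (-(((n : ℝ) + 1) * Real.pi / L) ^ 2 * t ^ α / α) *
          (Real.cos ((((n : ℝ) + 1) * Real.pi / L) * z) * (((n : ℝ) + 1) * Real.pi / L))‖
          ≤ (Real.pi/L) * (((n : ℝ) + 1) ^ 2 * |b (n+1)|) := by
      intro n z
      have hE0 : (0:ℝ) < Real.exp (-(((n : ℝ) + 1) * Real.pi / L) ^ 2 * t ^ α / α) :=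
        Real.exp_pos _
      have hCos := Real.abs_cos_le_one ((((n : ℝ) + 1) * Real.pi / L) * z)
      have hC0 := hcn n
      rw [Real.norm_eq_abs, abs_mul, abs_mul, abs_mul, abs_of_pos hE0, abs_of_pos hC0]
      have h1 : ((n : ℝ) + 1) * Real.pi / L ≤ ((n : ℝ) + 1)^2 * (Real.pi / L) := by
        have h2 : ((n : ℝ) + 1) ≤ ((n : ℝ) + 1)^2 := by nlinarith [Nat.cast_nonneg (α := ℝ) n]
        calc ((n : ℝ) + 1) * Real.pi / L = ((n : ℝ) + 1) * (Real.pi / L) := by ring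
          _ ≤ ((n : ℝ) + 1)^2 * (Real.pi / L) := by
              apply mul_le_mul_of_nonneg_right h2
              positivity
      have hb0 : (0:ℝ) ≤ |b (n+1)| := abs_nonneg _
      have hcos0 : (0:ℝ) ≤ |Real.cos ((((n : ℝ) + 1) * Real.pi / L) * z)| := abs_nonneg _
      have hEb : |b (n+1)| * Real.exp (-(((n : ℝ) + 1) * Real.pi / L) ^ 2 * t ^ α / α)
          ≤ |b (n+1)| := by
        have := mul_le_mul_of_nonneg_left (hEt1 n) hb0
        linarith [this]
      have hstep : |Real.cos ((((n : ℝ) + 1) * Real.pi / L) * z)| * (((n : ℝ) + 1) * Real.pi / L)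
          ≤ ((n : ℝ) + 1)^2 * (Real.pi / L) := by
        have h3 : |Real.cos ((((n : ℝ) + 1) * Real.pi / L) * z)| * (((n : ℝ) + 1) * Real.pi / L)
            ≤ ((n : ℝ) + 1) * Real.pi / L := by
          have := mul_le_mul_of_nonneg_right hCos hC0.le
          linarith [this]
        exact h3.trans h1
      calc |b (n+1)| * Real.exp (-(((n : ℝ) + 1) * Real.pi / L) ^ 2 * t ^ α / α) *
            (|Real.cos ((((n : ℝ) + 1) * Real.pi / L) * z)| * (((n : ℝ) + 1) * Real.pi / L))
          ≤ |b (n+1)| * (((n : ℝ) + 1)^2 * (Real.pi / L)) :=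
            mul_le_mul hEb hstep (mul_nonneg hcos0 hC0.le) hb0
        _ = (Real.pi/L) * (((n : ℝ) + 1) ^ 2 * |b (n+1)|) := by ring
    have hp0 : Summable (fun n : ℕ => b (n + 1) *
        Real.exp (-(((n : ℝ) + 1) * Real.pi / L) ^ 2 * t ^ α / α) *
          Real.sin ((((n : ℝ) + 1) * Real.pi / L) * (0:ℝ))) := by
      simp only [mul_zero, Real.sin_zero]
      simpa using summable_zero
    have hD1 : ∀ z : ℝ, HasDerivAt (fun y : ℝ => ∑' n : ℕ,
        b (n + 1) * Real.exp (-(((n : ℝ) + 1) * Real.pi / L) ^ 2 * t ^ α / α) *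
          Real.sin ((((n : ℝ) + 1) * Real.pi / L) * y))
        (∑' n : ℕ, b (n + 1) * Real.exp (-(((n : ℝ) + 1) * Real.pi / L) ^ 2 * t ^ α / α) *
          (Real.cos ((((n : ℝ) + 1) * Real.pi / L) * z) * (((n : ℝ) + 1) * Real.pi / L))) z :=
      fun z => hasDerivAt_tsum hu1' hp (fun n y => hpbound n y) hp0 z
    have hderiv1 : deriv (fun z : ℝ => u t z) = fun z : ℝ => ∑' n : ℕ,
        b (n + 1) * Real.exp (-(((n : ℝ) + 1) * Real.pi / L) ^ 2 * t ^ α / α) *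
          (Real.cos ((((n : ℝ) + 1) * Real.pi / L) * z) * (((n : ℝ) + 1) * Real.pi / L)) := by
      funext z
      rw [hux]
      exact (hD1 z).deriv
    have hq : ∀ (n : ℕ) (z : ℝ), HasDerivAt
        (fun z : ℝ => b (n + 1) * Real.exp (-(((n : ℝ) + 1) * Real.pi / L) ^ 2 * t ^ α / α) *
          (Real.cos ((((n : ℝ) + 1) * Real.pi / L) * z) * (((n : ℝ) + 1) * Real.pi / L)))
        (b (n + 1) * Real.exp (-(((n : ℝ) + 1) * Real.pi / L) ^ 2 * t ^ α / α) *
          ((-Real.sin ((((n : ℝ) + 1) * Real.pi / L) * z) * (((n : ℝ) + 1) * Real.pi / L)) *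
            (((n : ℝ) + 1) * Real.pi / L))) z := by
      intro n z
      exact (((hinner n z).cos).mul_const _).const_mul _
    have hqbound : ∀ (n : ℕ) (z : ℝ),
        ‖b (n + 1) * Real.exp (-(((n : ℝ) + 1) * Real.pi / L) ^ 2 * t ^ α / α) *
          ((-Real.sin ((((n : ℝ) + 1) * Real.pi / L) * z) * (((n : ℝ) + 1) * Real.pi / L)) *
            (((n : ℝ) + 1) * Real.pi / L))‖
          ≤ (Real.pi/L)^2 * (((n : ℝ) + 1) ^ 2 * |b (n+1)|) := by
      intro n z
      have hE0 : (0:ℝ) < Real.exp (-(((n : ℝ) + 1) * Real.pi / L) ^ 2 * t ^ α / α) :=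
        Real.exp_pos _
      have hSin := Real.abs_sin_le_one ((((n : ℝ) + 1) * Real.pi / L) * z)
      have hC0 := hcn n
      rw [Real.norm_eq_abs, abs_mul, abs_mul, abs_mul, abs_mul, abs_neg,
        abs_of_pos hE0, abs_of_pos hC0]
      have hb0 : (0:ℝ) ≤ |b (n+1)| := abs_nonneg _
      have hsin0 : (0:ℝ) ≤ |Real.sin ((((n : ℝ) + 1) * Real.pi / L) * z)| := abs_nonneg _
      have hEb : |b (n+1)| * Real.exp (-(((n : ℝ) + 1) * Real.pi / L) ^ 2 * t ^ α / α)
          ≤ |b (n+1)| := by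
        have := mul_le_mul_of_nonneg_left (hEt1 n) hb0
        linarith [this]
      have hstep : |Real.sin ((((n : ℝ) + 1) * Real.pi / L) * z)| * (((n : ℝ) + 1) * Real.pi / L) *
            (((n : ℝ) + 1) * Real.pi / L)
          ≤ (((n : ℝ) + 1) * Real.pi / L) * (((n : ℝ) + 1) * Real.pi / L) := by
        have := mul_le_mul_of_nonneg_right
          (mul_le_mul_of_nonneg_right hSin hC0.le) hC0.le
        linarith [this]
      calc |b (n+1)| * Real.exp (-(((n : ℝ) + 1) * Real.pi / L) ^ 2 * t ^ α / α) *
            (|Real.sin ((((n : ℝ) + 1) * Real.pi / L) * z)| * (((n : ℝ) + 1) * Real.pi / L) *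
              (((n : ℝ) + 1) * Real.pi / L))
          ≤ |b (n+1)| * ((((n : ℝ) + 1) * Real.pi / L) * (((n : ℝ) + 1) * Real.pi / L)) :=
            mul_le_mul hEb hstep (by positivity) hb0
        _ = (Real.pi/L)^2 * (((n : ℝ) + 1) ^ 2 * |b (n+1)|) := by ring
    have hq0 : Summable (fun n : ℕ => b (n + 1) *
        Real.exp (-(((n : ℝ) + 1) * Real.pi / L) ^ 2 * t ^ α / α) *
          (Real.cos ((((n : ℝ) + 1) * Real.pi / L) * (0:ℝ)) * (((n : ℝ) + 1) * Real.pi / L))) :=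
      Summable.of_norm_bounded hu1' (fun n => hpbound n 0)
    have hD2 : HasDerivAt (fun y : ℝ => ∑' n : ℕ,
        b (n + 1) * Real.exp (-(((n : ℝ) + 1) * Real.pi / L) ^ 2 * t ^ α / α) *
          (Real.cos ((((n : ℝ) + 1) * Real.pi / L) * y) * (((n : ℝ) + 1) * Real.pi / L)))
        (∑' n : ℕ, b (n + 1) * Real.exp (-(((n : ℝ) + 1) * Real.pi / L) ^ 2 * t ^ α / α) *
          ((-Real.sin ((((n : ℝ) + 1) * Real.pi / L) * x) * (((n : ℝ) + 1) * Real.pi / L)) *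
            (((n : ℝ) + 1) * Real.pi / L))) x :=
      hasDerivAt_tsum hu2' hq (fun n y => hqbound n y) hq0 x
    have hderiv2 : deriv (deriv (fun z : ℝ => u t z)) x = ∑' n : ℕ,
        b (n + 1) * Real.exp (-(((n : ℝ) + 1) * Real.pi / L) ^ 2 * t ^ α / α) *
          ((-Real.sin ((((n : ℝ) + 1) * Real.pi / L) * x) * (((n : ℝ) + 1) * Real.pi / L)) *
            (((n : ℝ) + 1) * Real.pi / L)) := by
      rw [hderiv1]
      exact hD2.deriv
    -- identify t^(1-α) * (time derivative sum) with the second spatial derivative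
    have key : t ^ (1-α) * t ^ (α-1) = 1 := by
      rw [← Real.rpow_add ht]
      norm_num
    have hmain : t ^ (1-α) * (∑' n : ℕ, b (n + 1) *
          (Real.exp (-(((n : ℝ) + 1) * Real.pi / L) ^ 2 * t ^ α / α) *
            (-(((n : ℝ) + 1) * Real.pi / L) ^ 2 * t ^ (α-1))) *
          Real.sin (((n : ℝ) + 1) * Real.pi * x / L))
        = deriv (deriv (fun z : ℝ => u t z)) x := by
      rw [hderiv2, ← tsum_mul_left]
      refine tsum_congr fun n => ?_
      rw [show ((n : ℝ) + 1) * Real.pi * x / L = (((n : ℝ) + 1) * Real.pi / L) * x by ring]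
      calc t ^ (1-α) * (b (n + 1) *
            (Real.exp (-(((n : ℝ) + 1) * Real.pi / L) ^ 2 * t ^ α / α) *
              (-(((n : ℝ) + 1) * Real.pi / L) ^ 2 * t ^ (α-1))) *
            Real.sin ((((n : ℝ) + 1) * Real.pi / L) * x))
          = (b (n + 1) * Real.exp (-(((n : ℝ) + 1) * Real.pi / L) ^ 2 * t ^ α / α) *
              ((-Real.sin ((((n : ℝ) + 1) * Real.pi / L) * x) * (((n : ℝ) + 1) * Real.pi / L)) *
                (((n : ℝ) + 1) * Real.pi / L))) * (t ^ (1-α) * t ^ (α-1)) := by ring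
        _ = _ := by rw [key, mul_one]
    -- conformable derivative via chain rule
    have hc1 : HasDerivAt (fun ε : ℝ => t + ε * t ^ (1-α)) (t ^ (1-α)) 0 := by
      simpa using ((hasDerivAt_id (0:ℝ)).mul_const (t ^ (1-α))).const_add t
    have houter : HasDerivAt (fun s : ℝ => u s x)
        (∑' n : ℕ, b (n + 1) *
          (Real.exp (-(((n : ℝ) + 1) * Real.pi / L) ^ 2 * t ^ α / α) *
            (-(((n : ℝ) + 1) * Real.pi / L) ^ 2 * t ^ (α-1))) *
          Real.sin (((n : ℝ) + 1) * Real.pi * x / L)) (t + 0 * t ^ (1-α)) := by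
      rw [zero_mul, add_zero, hut]
      exact hF
    have hcomp := houter.comp 0 hc1
    rw [hasDerivAt_iff_tendsto_slope] at hcomp
    unfold HasConformableDerivAt
    have heqf : (fun ε : ℝ => (u (t + ε * t ^ (1 - α)) x - u t x) / ε)
        = slope ((fun s : ℝ => u s x) ∘ fun ε : ℝ => t + ε * t ^ (1-α)) 0 := by
      funext ε
      rw [slope_def_field]
      simp [Function.comp]
    rw [heqf, ← hmain]
    convert hcomp using 2
    ring
end
end
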